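/- Every simple directed path (v_0, v_1, ..., v_n) in a rooted cactus digraph (G, r) is single-dipped with respect to the preorder ≼: there exists k ∈ [0, n] such that v_0 ≽ v_1 ≽ ... ≽ v_k ≼ v_{k+1} ≼ ... ≼ v_n. -/

import Mathlib

structure DirGraph (V : Type) where
  Adj : V → V → Prop
  loopless : ∀ v, ¬ Adj v v

namespace DirGraph

variable {V V' : Type}

/-- A walk is a nonempty list of vertices with consecutive arcs. -/
def IsWalk (G : DirGraph V) : List V → Prop
  | [] => False
  | [_] => True
  | a :: b :: l => G.Adj a b ∧ G.IsWalk (b :: l)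

def IsWalkFromTo (G : DirGraph V) (p : List V) (x y : V) : Prop :=
  G.IsWalk p ∧ p.head? = some x ∧ p.getLast? = some y

def StronglyConnected (G : DirGraph V) : Prop :=
  ∀ x y : V, ∃ p, G.IsWalkFromTo p x y

def IsSimplePath (G : DirGraph V) (p : List V) : Prop :=
  G.IsWalk p ∧ p.Nodup

def IsSimplePathFromTo (G : DirGraph V) (p : List V) (x y : V) : Prop :=
  G.IsSimplePath p ∧ p.head? = some x ∧ p.getLast? = some y

/-- The arcs of a walk given as a list of vertices. -/
def arcs (p : List V) : List (V × V) := p.zip p.tail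

/-- The preterminal (second-to-last) vertex of a path. -/
def preterminal (p : List V) : Option V := p.dropLast.getLast?

/-- A simple cycle: a closed walk whose vertices are distinct except for the
repeated endpoint. -/
def IsSimpleCycle (G : DirGraph V) (p : List V) : Prop :=
  G.IsWalk p ∧ 2 ≤ p.length ∧ p.head? = p.getLast? ∧ p.dropLast.Nodup

/-- Two cycles are equal as cycles when they have the same set of arcs. -/
def CycleEquiv (p q : List V) : Prop :=
  ∀ a : V × V, a ∈ arcs p ↔ a ∈ arcs q

/-- Each arc lies in exactly one simple cycle (up to arc-set equality). -/
def CactusArcCond (G : DirGraph V) : Prop :=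
  ∀ x y, G.Adj x y →
    (∃ p, G.IsSimpleCycle p ∧ (x, y) ∈ arcs p) ∧
    (∀ p q, G.IsSimpleCycle p → (x, y) ∈ arcs p →
      G.IsSimpleCycle q → (x, y) ∈ arcs q → CycleEquiv p q)

/-- A cactus digraph: strongly connected and each arc lies in exactly one
simple cycle. -/
def IsCactus (G : DirGraph V) : Prop :=
  G.StronglyConnected ∧ G.CactusArcCond

noncomputable def inDeg (G : DirGraph V) (v : V) : ℕ := Nat.card {u // G.Adj u v}
noncomputable def outDeg (G : DirGraph V) (v : V) : ℕ := Nat.card {u // G.Adj v u}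

/-- A connecting point: a vertex shared by two distinct simple cycles. -/
def IsConnectingPoint (G : DirGraph V) (v : V) : Prop :=
  ∃ p q, G.IsSimpleCycle p ∧ G.IsSimpleCycle q ∧ ¬ CycleEquiv p q ∧ v ∈ p ∧ v ∈ q

/-- An expansion of digraphs. -/
structure IsExpansion (G' : DirGraph V') (G : DirGraph V) (φ : V' → V) : Prop where
  map_adj : ∀ ⦃x y⦄, G'.Adj x y → G.Adj (φ x) (φ y)
  vert_surj : Function.Surjective φ
  arc_surj : ∀ ⦃x y⦄, G.Adj x y → ∃ x' y', G'.Adj x' y' ∧ φ x' = x ∧ φ y' = y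
  lift : ∀ ⦃x y⦄, G.Adj x y → ∀ y', φ y' = y → ∃! x', G'.Adj x' y' ∧ φ x' = x

/-- A doubly bidirectionally connected pair. -/
def Dbcp (G : DirGraph V) (p q : V) : Prop :=
  p ≠ q ∧
  (∃ P Q, G.IsSimplePathFromTo P p q ∧ G.IsSimplePathFromTo Q p q ∧
    preterminal P ≠ preterminal Q) ∧
  (∃ P Q, G.IsSimplePathFromTo P q p ∧ G.IsSimplePathFromTo Q q p ∧
    preterminal P ≠ preterminal Q)

/-- Subgraph of a digraph: a vertex subset together with a subrelation of arcs
supported on it. -/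
structure Subgraph (G : DirGraph V) where
  verts : Set V
  Adj : V → V → Prop
  adj_sub : ∀ ⦃x y⦄, Adj x y → G.Adj x y
  mem_left : ∀ ⦃x y⦄, Adj x y → x ∈ verts
  mem_right : ∀ ⦃x y⦄, Adj x y → y ∈ verts

def Subgraph.toDirGraph {G : DirGraph V} (H : Subgraph G) : DirGraph V :=
  ⟨H.Adj, fun v h => G.loopless v (H.adj_sub h)⟩

/-- A sub-cactus digraph: a nonempty subgraph that is strongly connected (on
its vertex set) and in which each arc lies in exactly one simple cycle. -/
def Subgraph.IsCactus {G : DirGraph V} (H : Subgraph G) : Prop :=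
  H.verts.Nonempty ∧
  (∀ x ∈ H.verts, ∀ y ∈ H.verts, ∃ p, H.toDirGraph.IsWalkFromTo p x y) ∧
  H.toDirGraph.CactusArcCond

def Subgraph.inter {G : DirGraph V} (H K : Subgraph G) : Subgraph G where
  verts := H.verts ∩ K.verts
  Adj x y := H.Adj x y ∧ K.Adj x y
  adj_sub := fun _ _ h => H.adj_sub h.1
  mem_left := fun _ _ h => ⟨H.mem_left h.1, K.mem_left h.2⟩
  mem_right := fun _ _ h => ⟨H.mem_right h.1, K.mem_right h.2⟩

def Subgraph.le {G : DirGraph V} (H K : Subgraph G) : Prop :=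
  H.verts ⊆ K.verts ∧ ∀ ⦃x y⦄, H.Adj x y → K.Adj x y

/-- The single-vertex subgraph. -/
def singleVert (G : DirGraph V) (v : V) : Subgraph G where
  verts := {v}
  Adj _ _ := False
  adj_sub := by intro _ _ h; exact h.elim
  mem_left := by intro _ _ h; exact h.elim
  mem_right := by intro _ _ h; exact h.elim

/-- The intersection of all sub-cactus digraphs of `G` containing `W`. -/
def CsubOf (G : DirGraph V) (W : Set V) : Subgraph G where
  verts := {x | ∀ H : Subgraph G, H.IsCactus → W ⊆ H.verts → x ∈ H.verts}
  Adj x y := G.Adj x y ∧ ∀ H : Subgraph G, H.IsCactus → W ⊆ H.verts → H.Adj x y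
  adj_sub := fun _ _ h => h.1
  mem_left := fun _ _ h H hH hW => H.mem_left (h.2 H hH hW)
  mem_right := fun _ _ h H hH hW => H.mem_right (h.2 H hH hW)

open Classical in
/-- `C G r v`: the minimum sub-cactus digraph containing `{r, v}` (and the
single vertex `{r}` when `v = r`). -/
noncomputable def C (G : DirGraph V) (r v : V) : Subgraph G :=
  if v = r then singleVert G r else CsubOf G {r, v}

/-- The preorder on vertices of the rooted cactus digraph `(G, r)`:
`v ≼ w ↔ C(v) ⊆ C(w)`. -/
def pre (G : DirGraph V) (r v w : V) : Prop :=
  Subgraph.le (C G r v) (C G r w)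

end DirGraph
namespace DirGraph

variable {V : Type} {G : DirGraph V}

lemma arcs_cons_cons (a b : V) (l : List V) :
    arcs (a :: b :: l) = (a, b) :: arcs (b :: l) := rfl

lemma isWalk_iff (G : DirGraph V) (p : List V) :
    G.IsWalk p ↔ p ≠ [] ∧ ∀ a ∈ arcs p, G.Adj a.1 a.2 := by
  induction p with
  | nil => simp [IsWalk]
  | cons a l ih =>
    cases l with
    | nil => simp [IsWalk, arcs]
    | cons b t =>
      rw [show G.IsWalk (a :: b :: t) = (G.Adj a b ∧ G.IsWalk (b :: t)) from rfl,
        arcs_cons_cons, ih]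
      simp only [ne_eq, reduceCtorEq, not_false_iff, true_and, List.mem_cons]
      constructor
      · rintro ⟨h1, h2⟩ x hx
        rcases hx with rfl | hx
        · exact h1
        · exact h2 x hx
      · intro h
        exact ⟨h (a, b) (Or.inl rfl), fun x hx => h x (Or.inr hx)⟩

lemma mem_arcs_iff {p : List V} {a : V × V} :
    a ∈ arcs p ↔ ∃ i : ℕ, ∃ h : i + 1 < p.length, p[i]'(Nat.lt_of_succ_lt h) = a.1 ∧ p[i+1] = a.2 := by
  unfold arcs
  rw [List.mem_iff_getElem]
  constructor
  · rintro ⟨i, hi, hget⟩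
    have hlen : i + 1 < p.length := by
      simp only [List.length_zip, List.length_tail] at hi; omega
    refine ⟨i, hlen, ?_, ?_⟩
    · rw [List.getElem_zip] at hget
      exact congrArg Prod.fst hget
    · rw [List.getElem_zip] at hget
      have := congrArg Prod.snd hget
      simpa [List.getElem_tail] using this
  · rintro ⟨i, hi, h1, h2⟩
    refine ⟨i, by simp [List.length_zip, List.length_tail]; omega, ?_⟩
    rw [List.getElem_zip]
    simp [List.getElem_tail, h1, h2]

lemma fst_mem_of_mem_arcs {p : List V} {a : V × V} (h : a ∈ arcs p) : a.1 ∈ p := by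
  rw [mem_arcs_iff] at h
  obtain ⟨i, hi, h1, _⟩ := h
  exact h1 ▸ List.getElem_mem _

lemma snd_mem_of_mem_arcs {p : List V} {a : V × V} (h : a ∈ arcs p) : a.2 ∈ p := by
  rw [mem_arcs_iff] at h
  obtain ⟨i, hi, _, h2⟩ := h
  exact h2 ▸ List.getElem_mem _

lemma walk_adj {p : List V} (hw : G.IsWalk p) {i : ℕ} (h : i + 1 < p.length) :
    G.Adj (p[i]'(Nat.lt_of_succ_lt h)) (p[i+1]'h) := by
  rw [isWalk_iff] at hw
  exact hw.2 (p[i], p[i+1]'h) (mem_arcs_iff.mpr ⟨i, h, rfl, rfl⟩)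

lemma arcs_append_cons (xs : List V) (y : V) (ys : List V) :
    arcs (xs ++ y :: ys) = arcs (xs ++ [y]) ++ arcs (y :: ys) := by
  induction xs with
  | nil => simp [arcs]
  | cons a xs ih =>
    cases xs with
    | nil => simp [arcs_cons_cons, arcs]
    | cons b t =>
      simp only [List.cons_append, arcs_cons_cons] at *
      rw [ih]

end DirGraph
namespace DirGraph

variable {V : Type} {G : DirGraph V}

lemma getLast?_append' {A B : List V} (hB : B ≠ []) : (A ++ B).getLast? = B.getLast? := by
  cases h : B.getLast? with
  | none => exact absurd (List.getLast?_eq_none_iff.mp h) hB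
  | some w => rw [List.getLast?_append, h]; rfl

lemma arcs_glue {A B : List V} {v : V} (hA : A.getLast? = some v) (hB : B.head? = some v) :
    arcs (A ++ B.tail) = arcs A ++ arcs B := by
  obtain ⟨t, rfl⟩ : ∃ t, B = v :: t := by
    cases B with
    | nil => simp at hB
    | cons b t => simp at hB; exact ⟨t, by rw [hB]⟩
  have hAne : A ≠ [] := by rintro rfl; simp at hA
  have hv : A.getLast hAne = v := by
    rw [List.getLast?_eq_getLast hAne] at hA; exact Option.some_inj.mp hA
  have hA' : A.dropLast ++ [v] = A := by
    rw [← hv]; exact List.dropLast_append_getLast hAne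
  calc arcs (A ++ t) = arcs ((A.dropLast ++ [v]) ++ t) := by rw [hA']
    _ = arcs (A.dropLast ++ v :: t) := by simp
    _ = arcs (A.dropLast ++ [v]) ++ arcs (v :: t) := arcs_append_cons _ _ _
    _ = arcs A ++ arcs (v :: t) := by rw [hA']

lemma head?_glue {A B : List V} (hA : A ≠ []) : (A ++ B.tail).head? = A.head? := by
  cases A with
  | nil => simp at hA
  | cons a t => simp

lemma getLast?_glue {A B : List V} {v : V} (hA : A.getLast? = some v) (hB : B.head? = some v) :
    (A ++ B.tail).getLast? = B.getLast? := by
  obtain ⟨t, rfl⟩ : ∃ t, B = v :: t := by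
    cases B with
    | nil => simp at hB
    | cons b t => simp at hB; exact ⟨t, by rw [hB]⟩
  cases t with
  | nil => simpa using hA
  | cons c t' =>
    rw [show (v :: c :: t').tail = c :: t' from rfl, getLast?_append' (by simp),
      List.getLast?_cons_cons]

lemma mem_glue {A B : List V} {x : V} (h : x ∈ A ++ B.tail) : x ∈ A ∨ x ∈ B := by
  rcases List.mem_append.mp h with h | h
  · exact Or.inl h
  · exact Or.inr (List.mem_of_mem_tail h)

/-- Glue two walks sharing an endpoint. -/
lemma glue_walks {A B : List V} {x v y : V}
    (hWA : G.IsWalk A) (hWB : G.IsWalk B)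
    (hAh : A.head? = some x) (hAl : A.getLast? = some v)
    (hBh : B.head? = some v) (hBl : B.getLast? = some y) :
    ∃ W, G.IsWalk W ∧ W.head? = some x ∧ W.getLast? = some y ∧
      (∀ a ∈ arcs W, a ∈ arcs A ∨ a ∈ arcs B) ∧
      (∀ u ∈ W, u ∈ A ∨ u ∈ B) := by
  have hAne : A ≠ [] := by rintro rfl; simp at hAh
  refine ⟨A ++ B.tail, ?_, ?_, ?_, ?_, fun u hu => mem_glue hu⟩
  · rw [isWalk_iff]
    refine ⟨by simp [hAne], ?_⟩
    intro a ha
    rw [arcs_glue hAl hBh, List.mem_append] at ha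
    rcases ha with ha | ha
    · exact ((isWalk_iff G A).mp hWA).2 a ha
    · exact ((isWalk_iff G B).mp hWB).2 a ha
  · rw [head?_glue hAne, hAh]
  · rw [getLast?_glue hAl hBh, hBl]
  · intro a ha
    rw [arcs_glue hAl hBh, List.mem_append] at ha
    exact ha

lemma exists_dup_split {l : List V} (h : ¬ l.Nodup) :
    ∃ (v : V) (l1 l2 l3 : List V), l = l1 ++ v :: (l2 ++ v :: l3) := by
  induction l with
  | nil => simp at h
  | cons a l ih =>
    by_cases ha : a ∈ l
    · obtain ⟨l2, l3, rfl⟩ := List.append_of_mem ha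
      exact ⟨a, [], l2, l3, rfl⟩
    · have hl : ¬ l.Nodup := by
        intro hl; exact h (List.nodup_cons.mpr ⟨ha, hl⟩)
      obtain ⟨v, l1, l2, l3, rfl⟩ := ih hl
      exact ⟨v, a :: l1, l2, l3, rfl⟩

lemma exists_simple_of_walk {p : List V} (h : G.IsWalk p) :
    ∃ q, G.IsWalk q ∧ q.Nodup ∧ q.head? = p.head? ∧ q.getLast? = p.getLast? ∧
      ∀ a ∈ arcs q, a ∈ arcs p := by
  suffices H : ∀ (n : ℕ) (p : List V), p.length = n → G.IsWalk p →
      ∃ q, G.IsWalk q ∧ q.Nodup ∧ q.head? = p.head? ∧ q.getLast? = p.getLast? ∧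
        ∀ a ∈ arcs q, a ∈ arcs p from H _ p rfl h
  intro n
  induction n using Nat.strong_induction_on with
  | _ n ih =>
  intro p hn h
  by_cases hnd : p.Nodup
  · exact ⟨p, h, hnd, rfl, rfl, fun a ha => ha⟩
  · obtain ⟨v, l1, l2, l3, rfl⟩ := exists_dup_split hnd
    set p' : List V := l1 ++ v :: l3 with hp'
    have harcs : ∀ a ∈ arcs p', a ∈ arcs (l1 ++ v :: (l2 ++ v :: l3)) := by
      intro a ha
      rw [hp', arcs_append_cons] at ha
      rw [arcs_append_cons, List.mem_append]
      rcases List.mem_append.mp ha with ha | ha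
      · exact Or.inl ha
      · right
        have h2 : v :: (l2 ++ v :: l3) = (v :: l2) ++ v :: l3 := by simp
        rw [h2, arcs_append_cons, List.mem_append]
        exact Or.inr ha
    have hwalk' : G.IsWalk p' := by
      rw [isWalk_iff]
      refine ⟨by simp [hp'], fun a ha => ((isWalk_iff G _).mp h).2 a (harcs a ha)⟩
    have hhead : p'.head? = (l1 ++ v :: (l2 ++ v :: l3)).head? := by
      cases l1 <;> simp [hp']
    have hlast : p'.getLast? = (l1 ++ v :: (l2 ++ v :: l3)).getLast? := by
      rw [hp', getLast?_append' (by simp), getLast?_append' (by simp),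
        show v :: (l2 ++ v :: l3) = (v :: l2) ++ v :: l3 by simp,
        getLast?_append' (by simp)]
    have hlen : p'.length < n := by
      subst hn; simp [hp']
    obtain ⟨q, hq1, hq2, hq3, hq4, hq5⟩ := ih p'.length hlen p' rfl hwalk'
    exact ⟨q, hq1, hq2, hq3.trans hhead, hq4.trans hlast, fun a ha => harcs a (hq5 a ha)⟩

end DirGraph
namespace DirGraph

variable {V : Type} {G : DirGraph V}

lemma head?_eq_getElem {p : List V} (h : 0 < p.length) : p.head? = some p[0] := by
  cases p with
  | nil => simp at h
  | cons a t => rfl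

lemma getLast?_eq_getElem {p : List V} (h : 0 < p.length) :
    p.getLast? = some (p[p.length - 1]'(by omega)) := by
  have hne : p ≠ [] := List.ne_nil_of_length_pos h
  rw [List.getLast?_eq_getLast hne, List.getLast_eq_getElem]

lemma exists_next_arc {p : List V} (hclosed : p.head? = p.getLast?) {u v : V}
    (h : (u, v) ∈ arcs p) : ∃ w, (v, w) ∈ arcs p := by
  rw [mem_arcs_iff] at h
  obtain ⟨i, hi, h1, h2⟩ := h
  dsimp only at h1 h2
  by_cases hcase : i + 2 < p.length
  · exact ⟨p[i+2], mem_arcs_iff.mpr ⟨i+1, hcase, h2, rfl⟩⟩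
  · have hlen : i + 2 = p.length := by omega
    have hv : v = p[0] := by
      rw [head?_eq_getElem (by omega), getLast?_eq_getElem (by omega)] at hclosed
      have h0 : p[0] = p[p.length - 1]'(by omega) := Option.some_inj.mp hclosed
      rw [h0, ← h2]; congr 1; omega
    exact ⟨p[1]'(by omega), mem_arcs_iff.mpr ⟨0, by omega, hv.symm, rfl⟩⟩

lemma exists_prev_arc {p : List V} (hclosed : p.head? = p.getLast?) {u v : V}
    (h : (u, v) ∈ arcs p) : ∃ w, (w, u) ∈ arcs p := by
  rw [mem_arcs_iff] at h
  obtain ⟨i, hi, h1, h2⟩ := h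
  dsimp only at h1 h2
  by_cases hcase : 0 < i
  · exact ⟨p[i-1]'(by omega), mem_arcs_iff.mpr ⟨i-1, by omega, rfl, by
      show p[i-1+1] = u
      rw [← h1]; congr 1; omega⟩⟩
  · have hi0 : i = 0 := by omega
    subst hi0
    have hu : u = p[p.length - 1]'(by omega) := by
      rw [head?_eq_getElem (by omega), getLast?_eq_getElem (by omega)] at hclosed
      have h0 : p[0] = p[p.length - 1]'(by omega) := Option.some_inj.mp hclosed
      rw [← h0]; exact h1.symm
    exact ⟨p[p.length - 2]'(by omega), mem_arcs_iff.mpr ⟨p.length - 2, by omega, rfl, by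
      show p[p.length - 2 + 1]'(by omega) = u
      rw [hu]; congr 1; omega⟩⟩

/-- The engine: any walk from `y` to `x` contains all arcs of the unique cycle
through the arc `(x, y)`, except possibly `(x, y)` itself. -/
lemma engine (hG : G.CactusArcCond) {x y : V} (hxy : G.Adj x y)
    {O : List V} (hO : G.IsSimpleCycle O) (hxyO : (x, y) ∈ arcs O)
    {W : List V} (hW : G.IsWalk W) (hh : W.head? = some y) (hl : W.getLast? = some x) :
    ∀ a ∈ arcs O, a ≠ (x, y) → a ∈ arcs W := by
  obtain ⟨P, hPwalk, hPnd, hPh, hPl, hParcs⟩ := exists_simple_of_walk hW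
  rw [hh] at hPh; rw [hl] at hPl
  obtain ⟨t, rfl⟩ : ∃ t, P = y :: t := by
    cases P with
    | nil => simp at hPh
    | cons b t => simp at hPh; exact ⟨t, by rw [hPh]⟩
  have hPne : (y :: t) ≠ [] := by simp
  -- the cycle x :: y :: t
  set c : List V := x :: y :: t with hc
  have hcarcs : arcs c = (x, y) :: arcs (y :: t) := arcs_cons_cons _ _ _
  have hcwalk : G.IsWalk c := by
    rw [isWalk_iff]
    refine ⟨by simp [hc], ?_⟩
    intro a ha
    rw [hcarcs] at ha
    rcases List.mem_cons.mp ha with rfl | ha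
    · exact hxy
    · exact ((isWalk_iff G _).mp hPwalk).2 a ha
  have hlastP : (y :: t).getLast hPne = x := by
    rw [List.getLast?_eq_getLast hPne] at hPl; exact Option.some_inj.mp hPl
  have hccyc : G.IsSimpleCycle c := by
    refine ⟨hcwalk, by simp [hc], ?_, ?_⟩
    · rw [show c.head? = some x from rfl, hc, List.getLast?_cons_cons, hPl]
    · rw [hc, show (x :: y :: t).dropLast = x :: (y :: t).dropLast by
        cases t <;> simp]
      rw [List.nodup_cons]
      constructor
      · intro hmem
        have hdrop : (y :: t).dropLast ++ [x] = y :: t := by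
          rw [← hlastP]; exact List.dropLast_append_getLast hPne
        have := hPnd
        rw [← hdrop, List.nodup_append] at this
        exact this.2.2 x hmem x (by simp) rfl
      · exact hPnd.sublist (List.dropLast_sublist _)
  have hxyc : (x, y) ∈ arcs c := by rw [hcarcs]; exact List.mem_cons_self
  have hequiv := (hG x y hxy).2 O c hO hxyO hccyc hxyc
  intro a ha hne
  have hac : a ∈ arcs c := (hequiv a).mp ha
  rw [hcarcs] at hac
  rcases List.mem_cons.mp hac with rfl | hac
  · exact absurd rfl hne
  · exact hParcs a hac

lemma sub_walk_isWalk {H : Subgraph G} {p : List V}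
    (h : H.toDirGraph.IsWalk p) : G.IsWalk p := by
  rw [isWalk_iff] at h ⊢
  exact ⟨h.1, fun a ha => H.adj_sub (h.2 a ha)⟩

lemma sub_walk_adj {H : Subgraph G} {p : List V}
    (h : H.toDirGraph.IsWalk p) {a : V × V} (ha : a ∈ arcs p) : H.Adj a.1 a.2 :=
  ((isWalk_iff _ p).mp h).2 a ha

lemma sub_walk_mem_verts {H : Subgraph G} {p : List V}
    (h : H.toDirGraph.IsWalk p) {v : V} (hv : v ∈ p) : v ∈ H.verts ∨ p = [v] := by
  induction p with
  | nil => simp at hv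
  | cons a l ih =>
    cases l with
    | nil => simp at hv; subst hv; exact Or.inr rfl
    | cons b t =>
      obtain ⟨hadj, hrest⟩ := h
      rcases List.mem_cons.mp hv with rfl | hv
      · exact Or.inl (H.mem_left hadj)
      · rcases ih hrest hv with h' | h'
        · exact Or.inl h'
        · have hb : b = v := by
            have := congrArg List.head? h'
            simpa using this
          subst hb
          exact Or.inl (H.mem_right hadj)

/-- A walk inside a sub-cactus between two of its vertices, with all data. -/
lemma sub_cactus_walk {H : Subgraph G} (hH : H.IsCactus) {x y : V}
    (hx : x ∈ H.verts) (hy : y ∈ H.verts) :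
    ∃ p, G.IsWalk p ∧ p.head? = some x ∧ p.getLast? = some y ∧
      (∀ v ∈ p, v ∈ H.verts) ∧ (∀ a ∈ arcs p, H.Adj a.1 a.2) := by
  obtain ⟨p, hw, hh, hl⟩ := hH.2.1 x hx y hy
  refine ⟨p, sub_walk_isWalk hw, hh, hl, ?_, fun a ha => sub_walk_adj hw ha⟩
  intro v hv
  rcases sub_walk_mem_verts hw hv with h | h
  · exact h
  · subst h; simp at hh; subst hh; exact hx
  
end DirGraph
namespace DirGraph

variable {V : Type} {G : DirGraph V}

/-- If a sub-cactus misses an endpoint of arc `(x,y)`, it contains no arc of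
the (unique) cycle through `(x,y)`. -/
lemma cactus_sub_no_arc (hG : G.CactusArcCond) {H : Subgraph G}
    (hH : H.IsCactus) {x y : V} (hxy : G.Adj x y) {O : List V}
    (hO : G.IsSimpleCycle O) (hxyO : (x, y) ∈ arcs O)
    (hmiss : x ∉ H.verts ∨ y ∉ H.verts) :
    ∀ a ∈ arcs O, ¬ H.Adj a.1 a.2 := by
  intro a ha hadj
  obtain ⟨q, hq, haq⟩ := (hH.2.2 a.1 a.2 hadj).1
  have hqG : G.IsSimpleCycle q := ⟨sub_walk_isWalk hq.1, hq.2.1, hq.2.2.1, hq.2.2.2⟩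
  have hGa : G.Adj a.1 a.2 := H.adj_sub hadj
  have hequiv := (hG a.1 a.2 hGa).2 O q hO ha hqG haq
  have hxyq : (x, y) ∈ arcs q := (hequiv (x, y)).mp hxyO
  have hHxy : H.Adj x y := sub_walk_adj hq.1 hxyq
  rcases hmiss with h | h
  · exact h (H.mem_left hHxy)
  · exact h (H.mem_right hHxy)

/-- Cut lemma: if `H` is a sub-cactus containing `r` and `x` but not `y`,
where `(x,y)` is an arc, then any walk from `y` to `r` passes through `x`. -/
lemma cut_lemma (hG : G.CactusArcCond) (hl : ∀ v, ¬ G.Adj v v) {H : Subgraph G}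
    (hH : H.IsCactus) {r x y : V}
    (hr : r ∈ H.verts) (hx : x ∈ H.verts) (hxy : G.Adj x y) (hy : y ∉ H.verts)
    {W : List V} (hW : G.IsWalk W) (hWh : W.head? = some y) (hWl : W.getLast? = some r) :
    x ∈ W := by
  obtain ⟨O, hO, hxyO⟩ := (hG x y hxy).1
  obtain ⟨Q, hQw, hQh, hQl, hQv, hQa⟩ := sub_cactus_walk hH hr hx
  obtain ⟨Z, hZw, hZh, hZl, hZarcs, hZmem⟩ := glue_walks hW hQw hWh hWl hQh hQl
  obtain ⟨w0, hw0⟩ := exists_prev_arc hO.2.2.1 hxyO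
  have hne : (w0, x) ≠ (x, y) := by
    intro hcontra
    have h1 : w0 = x := congrArg Prod.fst hcontra
    have h2 : x = y := congrArg Prod.snd hcontra
    exact hl x (h2 ▸ hxy)
  have hmem := engine hG hxy hO hxyO hZw hZh hZl (w0, x) hw0 hne
  rcases hZarcs _ hmem with h | h
  · exact snd_mem_of_mem_arcs h
  · exact absurd (hQa _ h) (cactus_sub_no_arc hG hH hxy hO hxyO (Or.inr hy) (w0, x) hw0)

/-! ### Path segments from an indexing function -/

lemma seg_length (w : ℕ → V) (a b : ℕ) : ((List.range' a b).map w).length = b := by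
  simp

lemma seg_getElem (w : ℕ → V) (a b : ℕ) {i : ℕ} (h : i < b) :
    ((List.range' a b).map w)[i]'(by simpa using h) = w (a + i) := by
  simp [List.getElem_range']

lemma seg_head (w : ℕ → V) (a : ℕ) {b : ℕ} (hb : 0 < b) :
    ((List.range' a b).map w).head? = some (w a) := by
  rw [head?_eq_getElem (by simpa using hb), seg_getElem w a b hb]
  simp

lemma seg_last (w : ℕ → V) (a : ℕ) {b : ℕ} (hb : 0 < b) :
    ((List.range' a b).map w).getLast? = some (w (a + b - 1)) := by
  obtain ⟨c, rfl⟩ : ∃ c, b = c + 1 := ⟨b - 1, by omega⟩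
  rw [List.range'_concat, List.map_append, getLast?_append' (by simp)]
  simp only [List.map_cons, List.map_nil, List.getLast?_singleton]
  congr 2
  omega

lemma seg_mem {w : ℕ → V} {a b : ℕ} {v : V} (h : v ∈ (List.range' a b).map w) :
    ∃ i < b, w (a + i) = v := by
  rw [List.mem_iff_getElem] at h
  obtain ⟨i, hi, hv⟩ := h
  have hib : i < b := by simpa using hi
  exact ⟨i, hib, by rw [← seg_getElem w a b hib]; exact hv⟩

lemma seg_arcs {w : ℕ → V} {a b : ℕ} {x : V × V} (h : x ∈ arcs ((List.range' a b).map w)) :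
    ∃ i, i + 1 < b ∧ x = (w (a + i), w (a + i + 1)) := by
  rw [mem_arcs_iff] at h
  obtain ⟨i, hi, h1, h2⟩ := h
  have hib : i + 1 < b := by simpa using hi
  obtain ⟨x1, x2⟩ := x
  dsimp only at h1 h2
  refine ⟨i, hib, ?_⟩
  rw [seg_getElem w a b (by omega)] at h1
  rw [seg_getElem w a b (by omega)] at h2
  rw [← h1, ← h2]
  exact rfl

lemma seg_walk {w : ℕ → V} {n : ℕ} (hadj : ∀ t < n, G.Adj (w t) (w (t+1)))
    {a b : ℕ} (hb : 0 < b) (hab : a + b - 1 ≤ n) :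
    G.IsWalk ((List.range' a b).map w) := by
  rw [isWalk_iff]
  constructor
  · intro hcon
    have := congrArg List.length hcon
    simp at this; omega
  · intro x hx
    obtain ⟨i, hi, hx⟩ := seg_arcs hx
    rw [hx]
    exact hadj (a + i) (by omega)

/-- The central combinatorial lemma. -/
lemma main_U (hGc : G.CactusArcCond) (hl : ∀ v, ¬ G.Adj v v) {r : V} {w : ℕ → V} {n : ℕ}
    (hn : 1 ≤ n)
    (hadj : ∀ t < n, G.Adj (w t) (w (t+1)))
    (hinj : ∀ s t, s ≤ n → t ≤ n → w s = w t → s = t)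
    {H K : Subgraph G} (hH : H.IsCactus) (hK : K.IsCactus)
    (hrH : r ∈ H.verts) (h0H : w 0 ∈ H.verts) (h1H : w 1 ∉ H.verts)
    (hrK : r ∈ K.verts) (hnK : w n ∈ K.verts) (hmK : w (n-1) ∉ K.verts) : False := by
  -- Step 1 : w 0 ∈ K.verts
  have h0K : w 0 ∈ K.verts := by
    obtain ⟨B, hBw, hBh, hBl, hBv, hBa⟩ := sub_cactus_walk hK hnK hrK
    have hAw : G.IsWalk ((List.range' 1 n).map w) :=
      seg_walk (a := 1) (b := n) hadj hn (by omega)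
    have hseg1_last : ((List.range' 1 n).map w).getLast? = some (w n) := by
      rw [seg_last w 1 hn]; congr 2; omega
    obtain ⟨Z, hZw, hZh, hZl, _, hZmem⟩ :=
      glue_walks hAw hBw (seg_head w 1 hn) hseg1_last hBh hBl
    have h0Z : w 0 ∈ Z :=
      cut_lemma hGc hl hH hrH h0H (hadj 0 hn) h1H hZw hZh hZl
    rcases hZmem _ h0Z with h | h
    · obtain ⟨i, hib, hwi⟩ := seg_mem h
      have := hinj (1 + i) 0 (by omega) (by omega) hwi
      omega
    · exact hBv _ h
  -- Step 2 : n = 1 gives an immediate contradiction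
  rcases Nat.lt_or_ge n 2 with h2 | h2
  · have : n = 1 := by omega
    rw [this] at hmK
    exact hmK h0K
  -- Step 3 : n ≥ 2
  · have hadj' : G.Adj (w (n-1)) (w n) := by
      have := hadj (n-1) (by omega)
      rwa [show n - 1 + 1 = n from by omega] at this
    obtain ⟨O, hO, hO'⟩ := (hGc (w (n-1)) (w n) hadj').1
    obtain ⟨T, hTw, hTh, hTl, hTv, hTa⟩ := sub_cactus_walk hK hnK h0K
    have hSw : G.IsWalk ((List.range' 0 n).map w) :=
      seg_walk (a := 0) (b := n) hadj (by omega) (by omega)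
    have hseg0_last : ((List.range' 0 n).map w).getLast? = some (w (n - 1)) := by
      rw [seg_last w 0 (show 0 < n by omega)]; congr 2; omega
    obtain ⟨S, hSw', hSh, hSl, hSarcs, _⟩ :=
      glue_walks hTw hSw hTh hTl (seg_head w 0 (by omega)) hseg0_last
    -- S is a walk from w n to w (n-1)
    obtain ⟨z, hz⟩ := exists_next_arc hO.2.2.1 hO'
    have hzne : (w n, z) ≠ (w (n-1), w n) := by
      intro hcontra
      have h1 : w n = w (n-1) := congrArg Prod.fst hcontra
      have := hinj n (n-1) (by omega) (by omega) h1
      omega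
    have hmem := engine hGc hadj' hO hO' hSw' hSh hSl (w n, z) hz hzne
    rcases hSarcs _ hmem with h | h
    · exact cactus_sub_no_arc hGc hK hadj' hO hO' (Or.inl hmK) (w n, z) hz (hTa _ h)
    · obtain ⟨i, hi, hx⟩ := seg_arcs h
      have h1 : w n = w (0 + i) := congrArg Prod.fst hx
      have := hinj n (0 + i) (by omega) (by omega) h1
      omega

end DirGraph
namespace DirGraph

variable {V : Type} {G : DirGraph V}

lemma singleVert_isCactus (G : DirGraph V) (r : V) : (singleVert G r).IsCactus := by
  refine ⟨⟨r, rfl⟩, ?_, ?_⟩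
  · intro x hx y hy
    have hxy : x = y := by
      have hx' : x = r := hx
      have hy' : y = r := hy
      rw [hx', hy']
    exact ⟨[x], trivial, rfl, by rw [hxy]; rfl⟩
  · intro x y h
    exact h.elim

lemma r_mem_C (G : DirGraph V) (r w : V) : r ∈ (C G r w).verts := by
  unfold C
  split
  · rfl
  · intro H hH hsub
    exact hsub (Set.mem_insert r {w})

lemma self_mem_C {r v : V} (hvr : v ≠ r) : v ∈ (C G r v).verts := by
  unfold C
  rw [if_neg hvr]
  intro H hH hsub
  exact hsub (Set.mem_insert_of_mem r rfl)

lemma pre_of_forall {r v w : V}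
    (h : ∀ H : Subgraph G, H.IsCactus → r ∈ H.verts → w ∈ H.verts → v ∈ H.verts) :
    pre G r v w := by
  by_cases hv : v = r
  · subst hv
    unfold pre Subgraph.le
    constructor
    · intro x hx
      have : x = v := by
        unfold C at hx; rw [if_pos rfl] at hx; exact hx
      subst this
      exact r_mem_C G x w
    · intro x y hxy
      unfold C at hxy
      rw [if_pos rfl] at hxy
      exact hxy.elim
  · by_cases hw : w = r
    · subst hw
      exfalso
      have := h (singleVert G w) (singleVert_isCactus G w) rfl rfl
      exact hv this
    · unfold pre Subgraph.le C
      rw [if_neg hv, if_neg hw]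
      have key : ∀ H : Subgraph G, H.IsCactus → ({r, w} : Set V) ⊆ H.verts →
          ({r, v} : Set V) ⊆ H.verts := by
        intro H hH hsub
        intro z hz
        rcases hz with rfl | hz
        · exact hsub (Set.mem_insert z {w})
        · have hz' : z = v := hz
          subst hz'
          exact h H hH (hsub (Set.mem_insert r {w})) (hsub (Set.mem_insert_of_mem r rfl))
      constructor
      · intro x hx H hH hsub
        exact hx H hH (key H hH hsub)
      · intro x y hxy
        exact ⟨hxy.1, fun H hH hsub => hxy.2 H hH (key H hH hsub)⟩

lemma exists_avoid_of_not_pre {r v w : V} (hnp : ¬ pre G r v w) :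
    ∃ H : Subgraph G, H.IsCactus ∧ r ∈ H.verts ∧ w ∈ H.verts ∧ v ∉ H.verts := by
  by_contra hc
  push_neg at hc
  exact hnp (pre_of_forall fun H hH h1 h2 => hc H hH h1 h2)

/-- The contradiction schema: a strictly "upward" step cannot be followed by a
strictly "downward" step on a simple path. -/
lemma schema (hG : G.IsCactus) (r : V) {vs : List V}
    (hwalk : G.IsWalk vs) (hnd : vs.Nodup) {i j : ℕ} (hij : i ≤ j) (hj : j + 1 < vs.length)
    (hD : ¬ pre G r (vs[i+1]'(by omega)) (vs[i]'(by omega)))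
    (hU : ¬ pre G r (vs[j]'(by omega)) (vs[j+1]'hj)) : False := by
  obtain ⟨H, hH, hrH, hwH, hvH⟩ := exists_avoid_of_not_pre hD
  obtain ⟨K, hK, hrK, hwK, hvK⟩ := exists_avoid_of_not_pre hU
  have h0 : 0 < vs.length := by omega
  set d : V := vs[0]'h0 with hd
  set w : ℕ → V := fun t => vs.getD (i + t) d with hw
  have hwt : ∀ t, ∀ ht : i + t < vs.length, w t = vs[i + t]'ht := by
    intro t ht
    rw [hw]
    exact List.getD_eq_getElem vs d ht
  set n : ℕ := j + 1 - i with hn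
  clear_value n
  apply main_U hG.2 G.loopless (r := r) (w := w) (n := n) (by omega)
  · intro t ht
    rw [hwt t (by omega), hwt (t+1) (by omega)]
    exact walk_adj hwalk (i := i + t) (h := by omega)
  · intro s t hs ht hst
    rw [hwt s (by omega), hwt t (by omega)] at hst
    have := (List.Nodup.getElem_inj_iff hnd).mp hst
    omega
  · exact hH
  · exact hK
  · exact hrH
  · rw [hwt 0 (by omega)]
    simpa using hwH
  · rw [hwt 1 (by omega)]
    simpa using hvH
  · exact hrK
  · rw [hwt n (by omega)]
    simp only [show i + n = j + 1 from by omega]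
    exact hwK
  · rw [hwt (n-1) (by omega)]
    simp only [show i + (n - 1) = j from by omega]
    exact hvK

end DirGraph

open DirGraph in
/-- Every simple path in a rooted cactus digraph is single-dipped with respect
to the preorder `≼`. -/
theorem simple_path_single_dipped {V : Type} (G : DirGraph V) (r : V)
    (hG : G.IsCactus) (vs : List V) (hp : G.IsSimplePath vs) :
    ∃ k, ∀ i, (h : i + 1 < vs.length) →
      (i < k → pre G r (vs[i+1]'h) (vs[i]'(by omega))) ∧
      (k ≤ i → pre G r (vs[i]'(by omega)) (vs[i+1]'h)) := by
  classical
  obtain ⟨hwalk, hnd⟩ := hp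
  set P : ℕ → Prop := fun j => ∃ h : j + 1 < vs.length,
    ¬ pre G r (vs[j]'(by omega)) (vs[j+1]'h) with hP
  by_cases hex : ∃ j, P j
  · obtain ⟨j0, hj0⟩ := hex
    have hj0le : j0 ≤ vs.length := by
      obtain ⟨h', _⟩ := hj0; omega
    set mx := Nat.findGreatest P vs.length with hmx
    have hPfg : P mx := Nat.findGreatest_spec hj0le hj0
    obtain ⟨hjlt, hjnp⟩ := hPfg
    refine ⟨mx + 1, fun i h => ⟨?_, ?_⟩⟩
    · intro hik
      by_contra hD
      exact schema hG r hwalk hnd (show i ≤ mx by omega) hjlt hD hjnp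
    · intro hki
      by_contra hU
      have hgt : Nat.findGreatest P vs.length < i := by omega
      exact Nat.findGreatest_is_greatest hgt (by omega) ⟨h, hU⟩
  · push_neg at hex
    refine ⟨0, fun i h => ⟨fun hi => absurd hi (by omega), fun _ => ?_⟩⟩
    by_contra hU
    exact hex i ⟨h, hU⟩
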